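/- For each j ∈ {1,...,n}, the group H acts transitively on the set Y_{2j−1} := {[z] ∈ (ℂⁿ∖{0})/ℝ^× : z_{j+1} = ⋯ = z_n = 0, z_j ≠ 0}, where H acts on ℂⁿ by matrix multiplication using the R_ε-action on ℂ and ℝ^× acts by real scalar multiplication. -/

import Mathlib

noncomputable section
open Complex

abbrev Reps : Type := ℂ × ℂ

def act (x : Reps) (z : ℂ) : ℂ := x.1 * z + x.2 * (starRingEnd ℂ) z

def Mact {n : ℕ} (A : Matrix (Fin n) (Fin n) Reps) (v : Fin n → ℂ) : Fin n → ℂ :=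
  fun i => ∑ k : Fin n, act (A i k) (v k)

def epsPow (a : ℂ) (m : ℕ) : Reps := if m % 2 = 0 then (a, 0) else (0, a)

def hmat (n : ℕ) (θ : ℝ) (a : ℕ → ℂ) : Matrix (Fin n) (Fin n) Reps :=
  fun i j =>
    if i = j then (Complex.exp (θ * I), 0)
    else if (i : ℕ) < (j : ℕ) then epsPow (a ((j : ℕ) - (i : ℕ))) ((j : ℕ) - (i : ℕ))
    else 0

def Hset (n : ℕ) : Set (Matrix (Fin n) (Fin n) Reps) :=
  {A | ∃ (θ : ℝ) (a : ℕ → ℂ), A = hmat n θ a}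

/-- z represents a point of Y_{2j−1} ⊂ (ℂⁿ∖{0})/ℝ^×, i.e. z_j ≠ 0 and z_k = 0 for k > j -/
def inY {n : ℕ} (j : Fin n) (z : Fin n → ℂ) : Prop :=
  z j ≠ 0 ∧ ∀ k : Fin n, j < k → z k = 0

namespace S11

/-- the coefficient of `a m` in a row: `z j` or its conjugate by parity -/
def cf (u : ℂ) (m : ℕ) : ℂ := if m % 2 = 0 then u else (starRingEnd ℂ) u

lemma act_zero (x : Reps) : act x 0 = 0 := by simp [act]

lemma act_zero' (u : ℂ) : act 0 u = 0 := by simp [act]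

lemma act_eps (v u : ℂ) (m : ℕ) : act (epsPow v m) u = v * cf u m := by
  unfold act epsPow cf
  split <;> simp

lemma cf_ne (u : ℂ) (hu : u ≠ 0) (m : ℕ) : cf u m ≠ 0 := by
  unfold cf; split <;> simp [hu]

variable {n : ℕ}

lemma hmat_diag (θ : ℝ) (a : ℕ → ℂ) (i : Fin n) :
    hmat n θ a i i = (Complex.exp (θ * I), 0) := by
  rw [hmat]; simp

lemma hmat_lt (θ : ℝ) (a : ℕ → ℂ) (i k : Fin n) (h : (i : ℕ) < (k : ℕ)) :
    hmat n θ a i k = epsPow (a ((k : ℕ) - (i : ℕ))) ((k : ℕ) - (i : ℕ)) := by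
  have hne : i ≠ k := by
    intro e; rw [e] at h; exact lt_irrefl _ h
  rw [hmat, if_neg hne, if_pos h]

lemma hmat_gt (θ : ℝ) (a : ℕ → ℂ) (i k : Fin n) (h : (k : ℕ) < (i : ℕ)) :
    hmat n θ a i k = 0 := by
  have hne : i ≠ k := by
    intro e; rw [e] at h; exact lt_irrefl _ h
  rw [hmat, if_neg hne, if_neg (not_lt.2 h.le)]

/-- row with index `> j` vanishes -/
lemma row_gt (θ : ℝ) (a : ℕ → ℂ) (z : Fin n → ℂ) (j i : Fin n)
    (hzz : ∀ k : Fin n, j < k → z k = 0) (hji : j < i) :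
    Mact (hmat n θ a) z i = 0 := by
  unfold Mact
  refine Finset.sum_eq_zero fun k _ => ?_
  rcases lt_trichotomy (i : ℕ) (k : ℕ) with h | h | h
  · rw [hzz k (lt_trans hji h), act_zero]
  · have : i = k := Fin.ext h
    subst this
    rw [hzz i hji, act_zero]
  · rw [hmat_gt θ a i k h, act_zero']

/-- the `j`-th row -/
lemma row_eq (θ : ℝ) (a : ℕ → ℂ) (z : Fin n → ℂ) (j : Fin n)
    (hzz : ∀ k : Fin n, j < k → z k = 0) :
    Mact (hmat n θ a) z j = Complex.exp (θ * I) * z j := by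
  unfold Mact
  rw [Finset.sum_eq_single j]
  · rw [hmat_diag]; simp [act]
  · intro k _ hk
    rcases lt_trichotomy (j : ℕ) (k : ℕ) with h | h | h
    · rw [hzz k h, act_zero]
    · exact absurd (Fin.ext h).symm hk
    · rw [hmat_gt θ a j k h, act_zero']
  · simp

/-- rows with index `< j`: splitting off the column-`j` term -/
lemma row_lt (θ : ℝ) (a b : ℕ → ℂ) (z : Fin n → ℂ) (j i : Fin n)
    (hzz : ∀ k : Fin n, j < k → z k = 0) (hij : i < j)
    (hab : ∀ d, 1 ≤ d → d < (j : ℕ) - (i : ℕ) → a d = b d)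
    (hb : b ((j : ℕ) - (i : ℕ)) = 0) :
    Mact (hmat n θ a) z i
      = Mact (hmat n θ b) z i + a ((j : ℕ) - (i : ℕ)) * cf (z j) ((j : ℕ) - (i : ℕ)) := by
  have hij' : (i : ℕ) < (j : ℕ) := hij
  have key : ∀ k : Fin n, k ≠ j →
      act (hmat n θ a i k) (z k) = act (hmat n θ b i k) (z k) := by
    intro k hk
    rcases lt_trichotomy (i : ℕ) (k : ℕ) with h | h | h
    · rcases lt_trichotomy (j : ℕ) (k : ℕ) with h2 | h2 | h2
      · rw [hzz k h2, act_zero, act_zero]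
      · exact absurd (Fin.ext h2).symm hk
      · rw [hmat_lt θ a i k h, hmat_lt θ b i k h, hab _ (by omega) (by omega)]
    · have : i = k := Fin.ext h
      subst this
      rw [hmat_diag, hmat_diag]
    · rw [hmat_gt θ a i k h, hmat_gt θ b i k h]
  unfold Mact
  have hsplit : ∀ c : ℕ → ℂ,
      (∑ k : Fin n, act (hmat n θ c i k) (z k))
        = (∑ k ∈ Finset.univ.erase j, act (hmat n θ c i k) (z k))
            + act (hmat n θ c i j) (z j) := by
    intro c
    rw [Finset.sum_erase_add _ _ (Finset.mem_univ j)]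
  rw [hsplit a, hsplit b, Finset.sum_congr rfl (fun k hk => key k (Finset.ne_of_mem_erase hk)),
    hmat_lt θ a i j hij', hmat_lt θ b i j hij', act_eps, act_eps, hb, zero_mul, add_zero]

/-- recursive solution of the triangular system -/
def P (j : Fin n) (z w : Fin n → ℂ) (θ t : ℝ) : ℕ → ℕ → ℂ
  | 0 => fun _ => 0
  | (m + 1) =>
    Function.update (P j z w θ t m) (m + 1)
      (((t : ℂ) * w ⟨(j : ℕ) - (m + 1), Nat.lt_of_le_of_lt (Nat.sub_le _ _) j.2⟩
          - Mact (hmat n θ (P j z w θ t m)) z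
              ⟨(j : ℕ) - (m + 1), Nat.lt_of_le_of_lt (Nat.sub_le _ _) j.2⟩)
        / cf (z j) (m + 1))

def aF (j : Fin n) (z w : Fin n → ℂ) (θ t : ℝ) : ℕ → ℂ :=
  fun m => P j z w θ t m m

lemma P_gt (j : Fin n) (z w : Fin n → ℂ) (θ t : ℝ) :
    ∀ N d, N < d → P j z w θ t N d = 0 := by
  intro N
  induction N with
  | zero => intro d _; rfl
  | succ m ih =>
    intro d hd
    show Function.update (P j z w θ t m) (m + 1) _ d = 0
    rw [Function.update_of_ne (by omega)]
    exact ih d (by omega)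

lemma P_stable (j : Fin n) (z w : Fin n → ℂ) (θ t : ℝ) :
    ∀ N d, d ≤ N → P j z w θ t N d = aF j z w θ t d := by
  intro N
  induction N with
  | zero => intro d hd; interval_cases d; rfl
  | succ m ih =>
    intro d hd
    rcases Nat.lt_or_ge d (m + 1) with h | h
    · show Function.update (P j z w θ t m) (m + 1) _ d = _
      rw [Function.update_of_ne (by omega)]
      exact ih d (by omega)
    · have : d = m + 1 := by omega
      subst this; rfl

lemma aF_succ (j : Fin n) (z w : Fin n → ℂ) (θ t : ℝ) (m : ℕ) :
    aF j z w θ t (m + 1)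
      = ((t : ℂ) * w ⟨(j : ℕ) - (m + 1), Nat.lt_of_le_of_lt (Nat.sub_le _ _) j.2⟩
          - Mact (hmat n θ (P j z w θ t m)) z
              ⟨(j : ℕ) - (m + 1), Nat.lt_of_le_of_lt (Nat.sub_le _ _) j.2⟩)
        / cf (z j) (m + 1) := by
  show P j z w θ t (m + 1) (m + 1) = _
  rw [P, Function.update_self]

end S11

open S11 in
/-- H acts transitively on each Y_{2j−1} ⊂ (ℂⁿ∖{0})/ℝ^×: any two representatives are
related by an element of H up to a nonzero real scalar. -/
theorem stmt11 (n : ℕ) (j : Fin n) (z w : Fin n → ℂ) (hz : inY j z) (hw : inY j w) :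
    ∃ A ∈ Hset n, ∃ t : ℝ, t ≠ 0 ∧ Mact A z = t • w := by
  obtain ⟨hzj, hzz⟩ := hz
  obtain ⟨hwj, hww⟩ := hw
  set θ : ℝ := (w j).arg - (z j).arg with hθ
  set t : ℝ := ‖z j‖ / ‖w j‖ with ht
  have ht0 : t ≠ 0 := by
    apply div_ne_zero <;> simp [hzj, hwj]
  -- the j-th coordinate matches
  have hkey : Complex.exp (θ * I) * z j = (t : ℂ) * w j := by
    have h1 : (‖z j‖ : ℂ) * Complex.exp ((z j).arg * I) = z j :=
      Complex.norm_mul_exp_arg_mul_I _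
    have h2 : (‖w j‖ : ℂ) * Complex.exp ((w j).arg * I) = w j :=
      Complex.norm_mul_exp_arg_mul_I _
    have hwa : (‖w j‖ : ℂ) ≠ 0 := by simp [hwj]
    have he : Complex.exp ((z j).arg * I) ≠ 0 := Complex.exp_ne_zero _
    have hA : z j / Complex.exp ((z j).arg * I) = (‖z j‖ : ℂ) := by
      rw [div_eq_iff he]; exact h1.symm
    have hstep : Complex.exp (θ * I) * z j
        = Complex.exp ((w j).arg * I) * (z j / Complex.exp ((z j).arg * I)) := by
      rw [hθ]
      push_cast
      rw [sub_mul, Complex.exp_sub]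
      ring
    rw [hstep, hA, ht]
    push_cast
    field_simp
    conv_rhs => rw [← h2]
    ring
  set a : ℕ → ℂ := aF j z w θ t with ha
  refine ⟨hmat n θ a, ⟨θ, a, rfl⟩, t, ht0, ?_⟩
  funext i
  rw [Pi.smul_apply, Complex.real_smul]
  rcases lt_trichotomy (i : ℕ) (j : ℕ) with hij | hij | hij
  · -- i < j : use the recursion
    have hijF : i < j := hij
    set m : ℕ := (j : ℕ) - (i : ℕ) with hm
    have hm1 : 1 ≤ m := by omega
    obtain ⟨m', hm'⟩ : ∃ m', m = m' + 1 := ⟨m - 1, by omega⟩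
    have hi : (⟨(j : ℕ) - (m' + 1), Nat.lt_of_le_of_lt (Nat.sub_le _ _) j.2⟩ : Fin n) = i :=
      Fin.ext (by simp only []; omega)
    have ham : a m = ((t : ℂ) * w i - Mact (hmat n θ (P j z w θ t m')) z i) / cf (z j) m := by
      rw [ha, hm', aF_succ, hi]
    have hrow := row_lt θ a (P j z w θ t m') z j i hzz hijF
      (fun d hd1 hd2 => by
        rw [ha]
        exact (P_stable j z w θ t m' d (by omega)).symm)
      (P_gt j z w θ t m' ((j : ℕ) - (i : ℕ)) (by omega))
    rw [hrow, show (j : ℕ) - (i : ℕ) = m from rfl, ham,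
      div_mul_cancel₀ _ (cf_ne (z j) hzj m)]
    ring
  · have : i = j := Fin.ext hij
    subst this
    rw [row_eq θ a z i hzz, hkey]
  · rw [row_gt θ a z j i hzz hij, hww i hij, mul_zero]
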